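/- Assume λ₁ > μ₁ and the strict reverse coexistence inequality m v (1−q) D n̄₁ₐ < ((1−q)D n̄₁ₐ + μ₂)(r+v). Then every complex eigenvalue of the 4×4 real matrix A(n̄₁ₐ,0,0,0) with rows (−(λ₁−μ₁), σ − C n̄₁ₐ, r − C n̄₁ₐ, −D n̄₁ₐ), (0, −κμ₁−σ, 0, q D n̄₁ₐ), (0, 0, −(r+v), (1−q)D n̄₁ₐ), (0, 0, mv, −μ₂−(1−q)D n̄₁ₐ) has strictly negative real part. -/

import Mathlib

/-- `z : ℂ` is an eigenvalue of the real matrix `A` (i.e. of its complexification):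
it is a root of the characteristic polynomial of `A` over `ℂ`. -/
noncomputable def IsEigOf {n : ℕ} (A : Matrix (Fin n) (Fin n) ℝ) (z : ℂ) : Prop :=
  ((A.map Complex.ofReal).charpoly).IsRoot z

lemma lin_root_neg (a : ℝ) (ha : 0 < a) (z : ℂ) (h : z + (a : ℂ) = 0) : z.re < 0 := by
  have : z = -(a : ℂ) := by linear_combination h
  simp [this]; linarith

lemma quad_root_neg (T Δ : ℝ) (hT : 0 < T) (hΔ : 0 < Δ) (z : ℂ)
    (h : z ^ 2 + (T : ℂ) * z + (Δ : ℂ) = 0) : z.re < 0 := by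
  have hre := congrArg Complex.re h
  have him := congrArg Complex.im h
  simp [pow_two, Complex.add_re, Complex.add_im, Complex.mul_re, Complex.mul_im] at hre him
  set x := z.re; set y := z.im
  have him' : y * (2 * x + T) = 0 := by ring_nf; ring_nf at him; linarith
  rcases mul_eq_zero.mp him' with hy | hx
  · nlinarith [sq_nonneg x, hre, hy]
  · linarith

theorem virus_free_equilibrium_stable
    (lam mu C D q kap sig r v mu2 m : ℝ)
    (hmu : 0 < mu) (hlm : mu < lam) (hC : 0 < C) (hD : 0 < D)
    (hq0 : 0 < q) (hq1 : q < 1) (hkap : 0 ≤ kap) (hsig : 0 < sig)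
    (hr : 0 < r) (hv : 0 < v) (hmu2 : 0 < mu2) (hm : 0 < m)
    (hrev : m * v * (1 - q) * D * ((lam - mu) / C)
        < ((1 - q) * D * ((lam - mu) / C) + mu2) * (r + v)) :
    ∀ z : ℂ,
      IsEigOf (!![-(lam - mu), sig - C * ((lam - mu) / C), r - C * ((lam - mu) / C),
                    -(D * ((lam - mu) / C));
                  0, -(kap * mu) - sig, 0, q * D * ((lam - mu) / C);
                  0, 0, -(r + v), (1 - q) * D * ((lam - mu) / C);
                  0, 0, m * v, -mu2 - (1 - q) * D * ((lam - mu) / C)]) z →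
      z.re < 0 := by
  intro z hz
  set nb : ℝ := (lam - mu) / C with hnb
  have hnbpos : 0 < nb := div_pos (by linarith) hC
  unfold IsEigOf at hz
  rw [Polynomial.IsRoot, Matrix.charpoly] at hz
  simp [Matrix.det_succ_row_zero, Fin.sum_univ_succ, Matrix.charmatrix_apply,
    Matrix.one_apply, Matrix.diagonal_apply, Matrix.map_apply, Fin.succ_ne_zero,
    Fin.val_succ] at hz
  set e : ℝ := (1 - q) * D * nb with he
  have hepos : 0 < e := by
    have h1q : 0 < 1 - q := by linarith
    positivity
  have hDet : m * v * e < (e + mu2) * (r + v) := by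
    calc m * v * e = m * v * (1 - q) * D * nb := by ring
      _ < ((1 - q) * D * nb + mu2) * (r + v) := hrev
      _ = (e + mu2) * (r + v) := by ring
  rcases hz with h1 | h2 | h3
  · refine lin_root_neg (lam - mu) (by linarith) z ?_
    push_cast
    linear_combination h1
  · refine lin_root_neg (kap * mu + sig) (by positivity) z ?_
    push_cast
    linear_combination h2
  · refine quad_root_neg ((r + v) + (mu2 + e)) ((r + v) * (mu2 + e) - m * v * e)
      (by positivity) (by nlinarith) z ?_
    rw [he]
    push_cast
    linear_combination h3
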